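/- Let X ∈ ℝ^{m×n} with rank(X) = s ≤ k. There exists δ > 0 such that every Y ∈ M_{≤k} with ‖Y − X‖_F < δ can be written Y = Y_s + Y_{k−s} where Y_s is a best rank-s approximation of Y satisfying rank(Y_s) = s and ‖Y_s − X‖_F < 2δ, and rank(Y_{k−s}) ≤ k−s. -/

import Mathlib

open Matrix
/-- Column space of a matrix. -/
def colSpace {m n : ℕ} (X : Matrix (Fin m) (Fin n) ℝ) : Set (Fin m → ℝ) :=
  {y | ∃ v, X.mulVec v = y}

/-- Row space of a matrix. -/
def rowSpace {m n : ℕ} (X : Matrix (Fin m) (Fin n) ℝ) : Set (Fin n → ℝ) :=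
  colSpace Xᵀ

/-- Orthogonal complement (w.r.t. the Euclidean dot product) of a set of vectors. -/
def perp {p : ℕ} (S : Set (Fin p → ℝ)) : Set (Fin p → ℝ) :=
  {x | ∀ u ∈ S, ∑ i, x i * u i = 0}

/-- `A ⊗ B`: matrices whose column space lies in `A` and row space lies in `B`. -/
def tensorSp {m n : ℕ} (A : Set (Fin m → ℝ)) (B : Set (Fin n → ℝ)) :
    Set (Matrix (Fin m) (Fin n) ℝ) :=
  {Z | (∀ v, Z.mulVec v ∈ A) ∧ (∀ u, Zᵀ.mulVec u ∈ B)}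

/-- Frobenius inner product. -/
noncomputable def frobInner {m n : ℕ} (A B : Matrix (Fin m) (Fin n) ℝ) : ℝ :=
  ∑ i, ∑ j, A i j * B i j

/-- Frobenius norm. -/
noncomputable def frobNorm {m n : ℕ} (A : Matrix (Fin m) (Fin n) ℝ) : ℝ :=
  Real.sqrt (frobInner A A)

/-- The tangent space `T_X M_s = (U⊗V) ⊕ (U^⊥⊗V) ⊕ (U⊗V^⊥)`, `U, V` column/row space of `X`. -/
def tangentMs {m n : ℕ} (X : Matrix (Fin m) (Fin n) ℝ) : Set (Matrix (Fin m) (Fin n) ℝ) :=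
  {Ξ | ∃ Z₁ ∈ tensorSp (colSpace X) (rowSpace X),
       ∃ Z₂ ∈ tensorSp (perp (colSpace X)) (rowSpace X),
       ∃ Z₃ ∈ tensorSp (colSpace X) (perp (rowSpace X)), Ξ = Z₁ + Z₂ + Z₃}

/-- Sequential tangent cone of a set of matrices, w.r.t. Frobenius distance. -/
def matTangentCone {m n : ℕ} (M : Set (Matrix (Fin m) (Fin n) ℝ))
    (X : Matrix (Fin m) (Fin n) ℝ) : Set (Matrix (Fin m) (Fin n) ℝ) :=
  {Ξ | ∃ (Y : ℕ → Matrix (Fin m) (Fin n) ℝ) (a : ℕ → ℝ),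
      (∀ i, Y i ∈ M) ∧ (∀ i, 0 < a i) ∧
      Filter.Tendsto (fun i => frobNorm (Y i - X)) Filter.atTop (nhds 0) ∧
      Filter.Tendsto (fun i => frobNorm (a i • (Y i - X) - Ξ)) Filter.atTop (nhds 0)}

/-- `P` is the orthogonal projector (symmetric idempotent matrix) onto `U`. -/
def IsOrthProjOnto {p : ℕ} (P : Matrix (Fin p) (Fin p) ℝ) (U : Set (Fin p → ℝ)) : Prop :=
  Pᵀ = P ∧ P * P = P ∧ colSpace P = U

namespace Stmt13Aux

variable {m n p : ℕ}

/-! ### The Frobenius norm via Euclidean space -/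

noncomputable def mat2euc (A : Matrix (Fin m) (Fin n) ℝ) : EuclideanSpace ℝ (Fin m × Fin n) :=
  (WithLp.equiv 2 _).symm (fun q => A q.1 q.2)

noncomputable def euc2mat (y : EuclideanSpace ℝ (Fin m × Fin n)) : Matrix (Fin m) (Fin n) ℝ :=
  Matrix.of fun i j => (WithLp.equiv 2 _) y (i, j)

@[simp] lemma euc2mat_mat2euc (A : Matrix (Fin m) (Fin n) ℝ) : euc2mat (mat2euc A) = A := rfl

@[simp] lemma mat2euc_euc2mat (y : EuclideanSpace ℝ (Fin m × Fin n)) :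
    mat2euc (euc2mat y) = y := rfl

lemma mat2euc_sub (A B : Matrix (Fin m) (Fin n) ℝ) : mat2euc (A - B) = mat2euc A - mat2euc B := rfl

lemma frobNorm_eq (A : Matrix (Fin m) (Fin n) ℝ) : frobNorm A = ‖mat2euc A‖ := by
  rw [EuclideanSpace.norm_eq, frobNorm, frobInner]
  congr 1
  rw [Fintype.sum_prod_type]
  refine Finset.sum_congr rfl fun i _ => Finset.sum_congr rfl fun j _ => ?_
  simp [mat2euc, Real.norm_eq_abs, sq_abs, sq]

lemma continuous_euc2mat : Continuous (euc2mat : EuclideanSpace ℝ (Fin m × Fin n) → _) := by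
  have h : Continuous fun (y : ∀ _ : Fin m × Fin n, ℝ) =>
      Matrix.of (fun i j => y (i, j)) :=
    continuous_pi fun i => continuous_pi fun j => continuous_apply (i, j)
  exact h.comp (PiLp.continuousLinearEquiv 2 ℝ _).continuous

lemma frobNorm_neg (A : Matrix (Fin m) (Fin n) ℝ) : frobNorm (-A) = frobNorm A := by
  have h : mat2euc (-A) = -(mat2euc A) := rfl
  rw [frobNorm_eq, frobNorm_eq, h, norm_neg]

lemma frobNorm_sub_comm (A B : Matrix (Fin m) (Fin n) ℝ) :
    frobNorm (A - B) = frobNorm (B - A) := by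
  rw [← frobNorm_neg (A - B), neg_sub]

lemma frobNorm_triangle (A B C : Matrix (Fin m) (Fin n) ℝ) :
    frobNorm (A - C) ≤ frobNorm (A - B) + frobNorm (B - C) := by
  rw [frobNorm_eq, frobNorm_eq, frobNorm_eq, mat2euc_sub, mat2euc_sub, mat2euc_sub]
  exact norm_sub_le_norm_sub_add_norm_sub _ _ _

/-! ### Lower semicontinuity of the rank -/

lemma exists_det_ne_zero (X : Matrix (Fin m) (Fin n) ℝ) :
    ∃ (U : Matrix (Fin X.rank) (Fin m) ℝ) (V : Matrix (Fin n) (Fin X.rank) ℝ),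
      (U * X * V).det ≠ 0 := by
  classical
  set r := X.rank with hr
  set W := LinearMap.range X.mulVecLin with hW
  have hfin : Module.finrank ℝ W = r := rfl
  let b : Module.Basis (Fin r) ℝ W := Module.finBasisOfFinrankEq ℝ W hfin
  have hpre : ∀ i : Fin r, ∃ v : Fin n → ℝ, X.mulVec v = (b i : Fin m → ℝ) := fun i => (b i).2
  choose v hv using hpre
  let V : Matrix (Fin n) (Fin r) ℝ := Matrix.of fun j i => v i j
  have hcol : ∀ i : Fin r, (X * V).mulVec (Pi.single i 1) = (b i : Fin m → ℝ) := by
    intro i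
    rw [← Matrix.mulVec_mulVec, Matrix.mulVec_single]
    have h2 : (fun j => V j i * 1) = v i := by funext j; simp [V]
    rw [show MulOpposite.op (1 : ℝ) • V.col i = v i by funext j; simp [V], hv]
  have hrange : LinearMap.range (X * V).mulVecLin = W := by
    apply le_antisymm
    · rw [Matrix.mulVecLin_mul]
      exact LinearMap.range_comp_le_range _ _
    · have hspan : W = Submodule.span ℝ (Set.range fun i => (b i : Fin m → ℝ)) := by
        conv_lhs => rw [← Submodule.map_subtype_top W]
        rw [← b.span_eq, Submodule.map_span]
        congr 1
        ext x
        simp [Set.range_comp]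
      rw [hspan, Submodule.span_le]
      rintro x ⟨i, rfl⟩
      exact ⟨Pi.single i 1, hcol i⟩
  have hrankXV : (X * V).rank = r := by
    rw [Matrix.rank, hrange]; exact hfin
  have hrankG : ((X * V)ᵀ * (X * V)).rank = r := by
    rw [Matrix.rank_transpose_mul_self]; exact hrankXV
  refine ⟨(X * V)ᵀ, V, ?_⟩
  have hassoc : (X * V)ᵀ * X * V = (X * V)ᵀ * (X * V) := Matrix.mul_assoc _ _ _
  rw [hassoc]
  set G := (X * V)ᵀ * (X * V) with hG
  have htop : LinearMap.range G.mulVecLin = ⊤ := by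
    apply Submodule.eq_top_of_finrank_eq
    rw [← Matrix.rank, hrankG, Module.finrank_fintype_fun_eq_card, Fintype.card_fin]
  have hsurj : Function.Surjective G.mulVecLin := LinearMap.range_eq_top.mp htop
  have hinj : Function.Injective G.mulVecLin :=
    (LinearMap.injective_iff_surjective).mpr hsurj
  intro hdet
  obtain ⟨vv, hvv, hvv0⟩ := (Matrix.exists_mulVec_eq_zero_iff).mpr hdet
  apply hvv
  have h3 : G.mulVecLin vv = G.mulVecLin 0 := by
    simp [Matrix.mulVecLin_apply, hvv0]
  exact hinj h3

lemma rank_lsc (X : Matrix (Fin m) (Fin n) ℝ) :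
    ∃ ε : ℝ, 0 < ε ∧ ∀ Y : Matrix (Fin m) (Fin n) ℝ,
      frobNorm (Y - X) < ε → X.rank ≤ Y.rank := by
  obtain ⟨U, V, hdet⟩ := exists_det_ne_zero X
  have hcont : Continuous fun y : EuclideanSpace ℝ (Fin m × Fin n) =>
      (U * euc2mat y * V).det := by
    have h1 : Continuous fun Y : Matrix (Fin m) (Fin n) ℝ => (U * Y * V).det := by
      exact Continuous.matrix_det ((Continuous.matrix_mul
        (Continuous.matrix_mul (continuous_const : Continuous fun _ :
          Matrix (Fin m) (Fin n) ℝ => U) continuous_id) continuous_const))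
    exact h1.comp continuous_euc2mat
  have hca : ContinuousAt (fun y : EuclideanSpace ℝ (Fin m × Fin n) =>
      (U * euc2mat y * V).det) (mat2euc X) := hcont.continuousAt
  rw [Metric.continuousAt_iff] at hca
  obtain ⟨ε, hε, hball⟩ := hca (|(U * X * V).det|) (abs_pos.mpr hdet)
  refine ⟨ε, hε, fun Y hY => ?_⟩
  have hdist : dist (mat2euc Y) (mat2euc X) < ε := by
    rw [dist_eq_norm, ← mat2euc_sub, ← frobNorm_eq]; exact hY
  have hb := hball hdist
  simp only [euc2mat_mat2euc] at hb
  have hne : (U * Y * V).det ≠ 0 := by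
    intro h0
    rw [h0] at hb
    simp only [dist_zero_left] at hb
    exact absurd hb (lt_irrefl _)
  have hunit : IsUnit (U * Y * V) :=
    (Matrix.isUnit_iff_isUnit_det _).mpr (isUnit_iff_ne_zero.mpr hne)
  have h1 : (U * Y * V).rank = X.rank := by
    rw [Matrix.rank_of_isUnit _ hunit, Fintype.card_fin]
  calc X.rank = (U * Y * V).rank := h1.symm
    _ = (U * (Y * V)).rank := by rw [Matrix.mul_assoc]
    _ ≤ (Y * V).rank := Matrix.rank_mul_le_right _ _
    _ ≤ Y.rank := Matrix.rank_mul_le_left _ _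

/-! ### Existence of a best rank-`s` approximation -/

lemma isClosed_rank_le (s : ℕ) :
    IsClosed {y : EuclideanSpace ℝ (Fin m × Fin n) | (euc2mat y).rank ≤ s} := by
  rw [← isOpen_compl_iff, Metric.isOpen_iff]
  intro y hy
  simp only [Set.mem_compl_iff, Set.mem_setOf_eq, not_le] at hy
  obtain ⟨ε, hε, hlsc⟩ := rank_lsc (euc2mat y)
  refine ⟨ε, hε, fun z hz => ?_⟩
  simp only [Set.mem_compl_iff, Set.mem_setOf_eq, not_le]
  have h1 : frobNorm (euc2mat z - euc2mat y) < ε := by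
    rw [frobNorm_eq, mat2euc_sub, mat2euc_euc2mat, mat2euc_euc2mat, ← dist_eq_norm]
    exact hz
  exact lt_of_lt_of_le hy (hlsc _ h1)

lemma exists_best (s' : ℕ) (Y : Matrix (Fin m) (Fin n) ℝ) :
    ∃ Ys : Matrix (Fin m) (Fin n) ℝ, Ys.rank ≤ s' ∧
      ∀ B : Matrix (Fin m) (Fin n) ℝ, B.rank ≤ s' →
        frobNorm (Y - Ys) ≤ frobNorm (Y - B) := by
  set T := {y : EuclideanSpace ℝ (Fin m × Fin n) | (euc2mat y).rank ≤ s'} with hT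
  have hcl : IsClosed T := isClosed_rank_le s'
  have hne : T.Nonempty := by
    refine ⟨0, ?_⟩
    have h0 : euc2mat (0 : EuclideanSpace ℝ (Fin m × Fin n)) = 0 := rfl
    simp only [hT, Set.mem_setOf_eq, h0, Matrix.rank_zero]
    exact Nat.zero_le _
  obtain ⟨y0, hy0T, hy0⟩ := hcl.exists_infDist_eq_dist hne (mat2euc Y)
  refine ⟨euc2mat y0, hy0T, fun B hB => ?_⟩
  have h1 : frobNorm (Y - euc2mat y0) = Metric.infDist (mat2euc Y) T := by
    rw [frobNorm_eq, mat2euc_sub, mat2euc_euc2mat, ← dist_eq_norm, hy0]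
  rw [h1, frobNorm_eq, mat2euc_sub, ← dist_eq_norm]
  exact Metric.infDist_le_dist_of_mem (by simpa [hT] using hB)

/-! ### Frobenius inner product computations -/

lemma frobInner_self_nonneg (A : Matrix (Fin m) (Fin n) ℝ) : 0 ≤ frobInner A A :=
  Finset.sum_nonneg fun _ _ => Finset.sum_nonneg fun _ _ => mul_self_nonneg _

lemma frobInner_self_eq_zero {A : Matrix (Fin m) (Fin n) ℝ} (h : frobInner A A = 0) :
    A = 0 := by
  have h1 := (Finset.sum_eq_zero_iff_of_nonneg
    (fun i _ => Finset.sum_nonneg fun j _ => mul_self_nonneg (A i j))).mp h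
  ext i j
  have h2 := (Finset.sum_eq_zero_iff_of_nonneg
    (fun j _ => mul_self_nonneg (A i j))).mp (h1 i (Finset.mem_univ i)) j (Finset.mem_univ j)
  simpa [mul_self_eq_zero] using h2

lemma sq_min_of_frobNorm_min {a b : ℝ} (hb : 0 ≤ b)
    (h : Real.sqrt a ≤ Real.sqrt b) : a ≤ b := by
  by_contra hab
  push_neg at hab
  exact absurd (Real.sqrt_lt_sqrt hb hab) (not_lt.mpr h)

lemma frobInner_expand (D Z : Matrix (Fin m) (Fin n) ℝ) (t : ℝ) :
    frobInner (D - t • Z) (D - t • Z) =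
      frobInner D D - 2 * t * frobInner D Z + t ^ 2 * frobInner Z Z := by
  simp only [frobInner, Matrix.sub_apply, Matrix.smul_apply, smul_eq_mul, Finset.mul_sum]
  rw [← Finset.sum_sub_distrib, ← Finset.sum_add_distrib]
  refine Finset.sum_congr rfl fun i _ => ?_
  rw [← Finset.sum_sub_distrib, ← Finset.sum_add_distrib]
  refine Finset.sum_congr rfl fun j _ => ?_
  ring

lemma sum_rot (f : Fin m → Fin n → Fin p → ℝ) :
    ∑ i, ∑ j, ∑ a, f i j a = ∑ a, ∑ j, ∑ i, f i j a := by
  rw [Finset.sum_comm]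
  refine Eq.trans (Finset.sum_congr rfl fun j _ => Finset.sum_comm) Finset.sum_comm

lemma frobInner_mul_left (D : Matrix (Fin m) (Fin n) ℝ) (Ys : Matrix (Fin m) (Fin p) ℝ)
    (N : Matrix (Fin p) (Fin n) ℝ) :
    frobInner D (Ys * N) = frobInner (Ysᵀ * D) N := by
  simp only [frobInner, Matrix.mul_apply, Matrix.transpose_apply, Finset.mul_sum,
    Finset.sum_mul]
  rw [sum_rot]
  refine Finset.sum_congr rfl fun a _ => Finset.sum_congr rfl fun j _ =>
    Finset.sum_congr rfl fun i _ => ?_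
  ring

lemma frobInner_mul_right (D : Matrix (Fin m) (Fin n) ℝ) (N : Matrix (Fin m) (Fin p) ℝ)
    (Ys : Matrix (Fin p) (Fin n) ℝ) :
    frobInner D (N * Ys) = frobInner (D * Ysᵀ) N := by
  simp only [frobInner, Matrix.mul_apply, Matrix.transpose_apply, Finset.mul_sum,
    Finset.sum_mul]
  refine Finset.sum_congr rfl fun i _ => ?_
  rw [Finset.sum_comm]
  refine Finset.sum_congr rfl fun a _ => Finset.sum_congr rfl fun j _ => ?_
  ring

lemma crit_point {a c : ℝ} (hc : 0 ≤ c) (h : ∀ t : ℝ, 0 ≤ -(2 * t * a) + t ^ 2 * c) :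
    a = 0 := by
  rcases eq_or_lt_of_le hc with hc0 | hc0
  · have h1 := h 1
    have h2 := h (-1)
    rw [← hc0] at h1 h2
    nlinarith
  · have h1 := h (a / c)
    have h2 : -(2 * (a / c) * a) + (a / c) ^ 2 * c = -(a ^ 2 / c) := by
      field_simp; ring
    rw [h2] at h1
    have ha2 : a ^ 2 ≤ 0 := by
      by_contra hh
      push_neg at hh
      have := div_pos hh hc0
      linarith
    nlinarith [sq_nonneg a]

/-! ### Rank lemmas -/

lemma matrank_add_le (A B : Matrix (Fin m) (Fin n) ℝ) : (A + B).rank ≤ A.rank + B.rank := by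
  rw [Matrix.rank, Matrix.rank, Matrix.rank]
  have hle : LinearMap.range (A + B).mulVecLin ≤
      LinearMap.range A.mulVecLin ⊔ LinearMap.range B.mulVecLin := by
    rw [Matrix.mulVecLin_add]
    rintro x ⟨v, rfl⟩
    exact Submodule.add_mem_sup ⟨v, rfl⟩ ⟨v, rfl⟩
  calc Module.finrank ℝ (LinearMap.range (A + B).mulVecLin)
      ≤ Module.finrank ℝ ((LinearMap.range A.mulVecLin ⊔ LinearMap.range B.mulVecLin :
          Submodule ℝ (Fin m → ℝ))) :=
        Submodule.finrank_mono hle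
    _ ≤ _ := by
        have := Submodule.finrank_sup_add_finrank_inf_eq
          (LinearMap.range A.mulVecLin) (LinearMap.range B.mulVecLin)
        omega

lemma rank_stdBasisMatrix_le (i : Fin m) (j : Fin n) (c : ℝ) :
    (Matrix.single i j c).rank ≤ 1 := by
  classical
  have hfac : Matrix.single i j c =
      (Matrix.of fun a (_ : Fin 1) => if i = a then c else 0) *
      (Matrix.of fun (_ : Fin 1) b => if j = b then (1 : ℝ) else 0) := by
    ext a b
    simp only [Matrix.mul_apply, Matrix.of_apply, Finset.univ_unique, Finset.sum_singleton,
      Matrix.single]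
    by_cases h1 : i = a <;> by_cases h2 : j = b <;> simp [h1, h2]
  rw [hfac]
  calc ((Matrix.of fun a (_ : Fin 1) => if i = a then c else 0) *
      (Matrix.of fun (_ : Fin 1) b => if j = b then (1 : ℝ) else 0)).rank
      ≤ (Matrix.of fun a (_ : Fin 1) => if i = a then c else 0).rank :=
        Matrix.rank_mul_le_left _ _
    _ ≤ Fintype.card (Fin 1) := Matrix.rank_le_card_width _
    _ = 1 := by simp

lemma rank_superadd (A B : Matrix (Fin p) (Fin p) ℝ) (hA : Aᵀ = A) (hB : Bᵀ = B)
    (hAB : A * B = 0) : A.rank + B.rank ≤ (A + B).rank := by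
  have hBA : B * A = 0 := by
    have h := congrArg Matrix.transpose hAB
    rwa [Matrix.transpose_mul, hA, hB, Matrix.transpose_zero] at h
  set Ra := LinearMap.range (A * A).mulVecLin with hRa
  set Rb := LinearMap.range (B * B).mulVecLin with hRb
  have hA2 : (A + B) * A = A * A := by rw [Matrix.add_mul, hBA, add_zero]
  have hB2 : (A + B) * B = B * B := by rw [Matrix.add_mul, hAB, zero_add]
  have hRale : Ra ≤ LinearMap.range (A + B).mulVecLin := by
    rintro x ⟨v, rfl⟩
    refine ⟨A.mulVec v, ?_⟩
    rw [Matrix.mulVecLin_apply, Matrix.mulVecLin_apply, Matrix.mulVec_mulVec, hA2]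
  have hRble : Rb ≤ LinearMap.range (A + B).mulVecLin := by
    rintro x ⟨v, rfl⟩
    refine ⟨B.mulVec v, ?_⟩
    rw [Matrix.mulVecLin_apply, Matrix.mulVecLin_apply, Matrix.mulVec_mulVec, hB2]
  have hdisj : Ra ⊓ Rb = ⊥ := by
    rw [Submodule.eq_bot_iff]
    rintro x ⟨⟨u, hu⟩, ⟨w, hw⟩⟩
    rw [Matrix.mulVecLin_apply] at hu hw
    have hxA : x = A.mulVec (A.mulVec u) := by
      rw [Matrix.mulVec_mulVec, hu]
    have hAx : A.mulVec x = 0 := by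
      rw [← hw, Matrix.mulVec_mulVec, ← Matrix.mul_assoc, hAB, Matrix.zero_mul,
        Matrix.zero_mulVec]
    have hxx : x ⬝ᵥ x = 0 := by
      calc x ⬝ᵥ x = x ⬝ᵥ (A *ᵥ (A *ᵥ u)) := by rw [← hxA]
        _ = (x ᵥ* A) ⬝ᵥ (A *ᵥ u) := Matrix.dotProduct_mulVec _ _ _
        _ = (A *ᵥ x) ⬝ᵥ (A *ᵥ u) := by
              congr 1
              rw [← Matrix.vecMul_transpose, hA]
        _ = 0 := by rw [hAx, zero_dotProduct]
    exact dotProduct_self_eq_zero.mp hxx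
  have hsum : Module.finrank ℝ Ra + Module.finrank ℝ Rb =
      Module.finrank ℝ (Ra ⊔ Rb : Submodule ℝ (Fin p → ℝ)) := by
    have h := Submodule.finrank_sup_add_finrank_inf_eq Ra Rb
    rw [hdisj] at h
    have h0 : Module.finrank ℝ (⊥ : Submodule ℝ (Fin p → ℝ)) = 0 := finrank_bot ℝ _
    omega
  have hAA : (A * A).rank = A.rank := by
    rw [show A * A = Aᵀ * A from by rw [hA]]
    exact Matrix.rank_transpose_mul_self A
  have hBB : (B * B).rank = B.rank := by
    rw [show B * B = Bᵀ * B from by rw [hB]]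
    exact Matrix.rank_transpose_mul_self B
  calc A.rank + B.rank = (A * A).rank + (B * B).rank := by rw [hAA, hBB]
    _ = Module.finrank ℝ Ra + Module.finrank ℝ Rb := rfl
    _ = Module.finrank ℝ (Ra ⊔ Rb : Submodule ℝ (Fin p → ℝ)) := hsum
    _ ≤ Module.finrank ℝ (LinearMap.range (A + B).mulVecLin) :=
        Submodule.finrank_mono (sup_le hRale hRble)
    _ = (A + B).rank := rfl

lemma rank_decomp (Y Ys : Matrix (Fin m) (Fin n) ℝ)
    (h1 : Ysᵀ * (Y - Ys) = 0) (h2 : (Y - Ys) * Ysᵀ = 0) :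
    Ys.rank + (Y - Ys).rank ≤ Y.rank := by
  set D := Y - Ys with hD
  have hYsD : Ys * Dᵀ = 0 := by
    have h := congrArg Matrix.transpose h2
    rwa [Matrix.transpose_mul, Matrix.transpose_transpose, Matrix.transpose_zero] at h
  set A := Ysᵀ * Ys with hA
  set B := Dᵀ * D with hB
  have hAs : Aᵀ = A := by rw [hA, Matrix.transpose_mul, Matrix.transpose_transpose]
  have hBs : Bᵀ = B := by rw [hB, Matrix.transpose_mul, Matrix.transpose_transpose]
  have hAB : A * B = 0 := by
    rw [hA, hB]
    calc Ysᵀ * Ys * (Dᵀ * D) = Ysᵀ * (Ys * Dᵀ) * D := by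
          rw [Matrix.mul_assoc, Matrix.mul_assoc, Matrix.mul_assoc]
      _ = 0 := by rw [hYsD, Matrix.mul_zero, Matrix.zero_mul]
  have hYtY : Yᵀ * Y = A + B := by
    have hYD : Y = Ys + D := by rw [hD]; abel
    rw [hYD, Matrix.transpose_add, Matrix.add_mul, Matrix.mul_add, Matrix.mul_add, hA, hB]
    have hDtYs : Dᵀ * Ys = 0 := by
      have h := congrArg Matrix.transpose h1
      rwa [Matrix.transpose_mul, Matrix.transpose_transpose, Matrix.transpose_zero] at h
    rw [h1, hDtYs]
    abel
  calc Ys.rank + D.rank = (Ysᵀ * Ys).rank + (Dᵀ * D).rank := by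
        rw [Matrix.rank_transpose_mul_self, Matrix.rank_transpose_mul_self]
    _ ≤ (A + B).rank := rank_superadd A B hAs hBs hAB
    _ = (Yᵀ * Y).rank := by rw [hYtY]
    _ = Y.rank := Matrix.rank_transpose_mul_self Y

/-! ### Properties of the minimizer -/

lemma frobInner_stdBasis (D : Matrix (Fin m) (Fin n) ℝ) (i : Fin m) (j : Fin n) (c : ℝ) :
    frobInner D (Matrix.single i j c) = D i j * c := by
  classical
  simp only [frobInner, Matrix.single, Matrix.of_apply, mul_ite, mul_zero]
  rw [Finset.sum_eq_single i]
  · rw [Finset.sum_eq_single j]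
    · simp
    · intro b _ hb
      simp [Ne.symm hb]
    · simp
  · intro a _ ha
    apply Finset.sum_eq_zero
    intro b _
    simp [Ne.symm ha]
  · simp

lemma rank_min_eq {s : ℕ} (Y Ys : Matrix (Fin m) (Fin n) ℝ) (hYs : Ys.rank ≤ s)
    (hmin : ∀ B : Matrix (Fin m) (Fin n) ℝ, B.rank ≤ s →
      frobNorm (Y - Ys) ≤ frobNorm (Y - B))
    (hY : s ≤ Y.rank) : Ys.rank = s := by
  by_contra hne
  have hlt : Ys.rank < s := lt_of_le_of_ne hYs hne
  by_cases hYeq : Y = Ys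
  · rw [hYeq] at hY; omega
  · have hij : ∃ i j, Y i j ≠ Ys i j := by
      by_contra h
      push_neg at h
      exact hYeq (by ext i j; exact h i j)
    obtain ⟨i, j, hij⟩ := hij
    set c := Y i j - Ys i j with hc
    have hc0 : c ≠ 0 := sub_ne_zero.mpr hij
    set E := Matrix.single i j c with hE
    set B := Ys + E with hBdef
    have hBrank : B.rank ≤ s := by
      have hadd := matrank_add_le Ys E
      have hstd : E.rank ≤ 1 := by
        rw [hE]; exact rank_stdBasisMatrix_le i j c
      rw [hBdef]
      omega
    have hYB : Y - B = (Y - Ys) - (1 : ℝ) • E := by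
      rw [hBdef, one_smul]; abel
    have hDE : frobInner (Y - Ys) E = c * c := by
      rw [hE, frobInner_stdBasis]
      simp [hc]
    have hEE : frobInner E E = c * c := by
      rw [hE, frobInner_stdBasis]
      simp [Matrix.single_apply_same]
    have hlt2 : frobInner (Y - B) (Y - B) < frobInner (Y - Ys) (Y - Ys) := by
      rw [hYB, frobInner_expand, hDE, hEE]
      nlinarith [mul_self_pos.mpr hc0]
    have hlt3 : frobNorm (Y - B) < frobNorm (Y - Ys) := by
      rw [frobNorm, frobNorm]
      exact Real.sqrt_lt_sqrt (frobInner_self_nonneg _) hlt2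
    exact absurd (hmin B hBrank) (not_le.mpr hlt3)

lemma min_orth {s : ℕ} (Y Ys : Matrix (Fin m) (Fin n) ℝ) (hYs : Ys.rank ≤ s)
    (hmin : ∀ B : Matrix (Fin m) (Fin n) ℝ, B.rank ≤ s →
      frobNorm (Y - Ys) ≤ frobNorm (Y - B)) :
    Ysᵀ * (Y - Ys) = 0 ∧ (Y - Ys) * Ysᵀ = 0 := by
  set D := Y - Ys with hD
  have key1 : ∀ N : Matrix (Fin n) (Fin n) ℝ, frobInner D (Ys * N) = 0 := by
    intro N
    set Z := Ys * N with hZ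
    apply crit_point (frobInner_self_nonneg Z)
    intro t
    have hBrank : (Ys * (1 + t • N)).rank ≤ s :=
      le_trans (Matrix.rank_mul_le_left _ _) hYs
    have hmin' := hmin _ hBrank
    have hYB : Y - Ys * (1 + t • N) = D - t • Z := by
      rw [Matrix.mul_add, Matrix.mul_one, Matrix.mul_smul, hD, hZ]
      abel
    rw [frobNorm, frobNorm, hYB] at hmin'
    have hsq := sq_min_of_frobNorm_min (frobInner_self_nonneg _) hmin'
    rw [frobInner_expand] at hsq
    linarith
  have key2 : ∀ N : Matrix (Fin m) (Fin m) ℝ, frobInner D (N * Ys) = 0 := by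
    intro N
    set Z := N * Ys with hZ
    apply crit_point (frobInner_self_nonneg Z)
    intro t
    have hBrank : ((1 + t • N) * Ys).rank ≤ s :=
      le_trans (Matrix.rank_mul_le_right _ _) hYs
    have hmin' := hmin _ hBrank
    have hYB : Y - (1 + t • N) * Ys = D - t • Z := by
      rw [Matrix.add_mul, Matrix.one_mul, Matrix.smul_mul, hD, hZ]
      abel
    rw [frobNorm, frobNorm, hYB] at hmin'
    have hsq := sq_min_of_frobNorm_min (frobInner_self_nonneg _) hmin'
    rw [frobInner_expand] at hsq
    linarith
  constructor
  · have h := key1 (Ysᵀ * D)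
    rw [frobInner_mul_left] at h
    exact frobInner_self_eq_zero h
  · have h := key2 (D * Ysᵀ)
    rw [frobInner_mul_right] at h
    exact frobInner_self_eq_zero h

end Stmt13Aux

/-- For `X` of rank `s ≤ k` there is `δ > 0` such that every `Y ∈ M_{≤k}`
with `‖Y − X‖_F < δ` splits as `Y = Y_s + Y_{k−s}` with `Y_s` a best rank-`s`
approximation of `Y`, `rank Y_s = s`, `‖Y_s − X‖_F < 2δ`, and `rank Y_{k−s} ≤ k−s`. -/
theorem stmt_13 {m n s k : ℕ} (X : Matrix (Fin m) (Fin n) ℝ)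
    (hrank : X.rank = s) (hsk : s ≤ k) :
    ∃ δ : ℝ, 0 < δ ∧
      ∀ Y : Matrix (Fin m) (Fin n) ℝ, Y.rank ≤ k → frobNorm (Y - X) < δ →
        ∃ Ys Yk : Matrix (Fin m) (Fin n) ℝ,
          Y = Ys + Yk ∧
          Ys.rank = s ∧
          (∀ B : Matrix (Fin m) (Fin n) ℝ, B.rank ≤ s →
            frobNorm (Y - Ys) ≤ frobNorm (Y - B)) ∧
          frobNorm (Ys - X) < 2 * δ ∧
          Yk.rank ≤ k - s := by
  obtain ⟨δ, hδ, hlsc⟩ := Stmt13Aux.rank_lsc X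
  refine ⟨δ, hδ, fun Y hYk hYX => ?_⟩
  obtain ⟨Ys, hYsrank, hmin⟩ := Stmt13Aux.exists_best s Y
  have hsY : s ≤ Y.rank := by rw [← hrank]; exact hlsc Y hYX
  have hYs_eq : Ys.rank = s := Stmt13Aux.rank_min_eq Y Ys hYsrank hmin hsY
  obtain ⟨h1, h2⟩ := Stmt13Aux.min_orth Y Ys hYsrank hmin
  refine ⟨Ys, Y - Ys, by abel, hYs_eq, hmin, ?_, ?_⟩
  · have h3 : frobNorm (Y - Ys) ≤ frobNorm (Y - X) := hmin X (le_of_eq hrank)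
    have h4 := Stmt13Aux.frobNorm_triangle Ys Y X
    have h5 : frobNorm (Ys - Y) = frobNorm (Y - Ys) := Stmt13Aux.frobNorm_sub_comm _ _
    linarith
  · have h6 := Stmt13Aux.rank_decomp Y Ys h1 h2
    rw [hYs_eq] at h6
    omega
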